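/- Let k be a field of characteristic zero and φ ∈ k((t)) with ν(φ) = 1 (i.e. φ = a₁t + a₂t² + ... with a₁ ≠ 0). Then 1 + Σ_{l ≥ 1} [φ^{-l}]₀ · φ^l = φ · (∂φ/∂t)^{-1} · t^{-1}, where [h]₀ denotes the constant coefficient (coefficient of t⁰) of h ∈ k((t)). -/

import Mathlib

open HahnSeries

/-- Termwise derivative of a Laurent series. -/
noncomputable def lderiv {A : Type*} [CommRing A] (f : LaurentSeries A) : LaurentSeries A where
  coeff := fun l => (l + 1) • f.coeff (l + 1)
  isPWO_support' := by
    have h : (Function.support fun l : ℤ => (l + 1) • f.coeff (l + 1)) ⊆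
        (fun l : ℤ => l - 1) '' f.support := by
      intro l hl
      have hc : f.coeff (l + 1) ≠ 0 := by
        intro h0; apply hl; simp [Function.mem_support, h0]
      exact ⟨l + 1, hc, by ring⟩
    refine (f.isPWO_support.image_of_monotoneOn ?_).mono h
    exact fun a _ b _ hab => by omega

set_option linter.unusedSectionVars false

namespace CTI

open Finset

variable {k : Type*} [Field k]

lemma lderiv_coeff {A : Type*} [CommRing A] (f : LaurentSeries A) (n : ℤ) :
    (lderiv f).coeff n = (n + 1) • f.coeff (n + 1) := rfl


instance : IsScalarTower k (LaurentSeries k) (LaurentSeries k) :=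
  ⟨fun c x y => by
    simp only [smul_eq_mul, ← HahnSeries.single_zero_mul_eq_smul, mul_assoc]⟩

instance : SMulCommClass k (LaurentSeries k) (LaurentSeries k) :=
  ⟨fun c x y => by
    simp only [smul_eq_mul, ← HahnSeries.single_zero_mul_eq_smul, mul_left_comm]⟩

lemma conv_support_finite (x y : LaurentSeries k) (a : ℤ) :
    (Function.support fun j : ℤ => x.coeff j * y.coeff (a - j)).Finite := by
  apply Set.Finite.subset
    ((Finset.antidiagonal x.isPWO_support y.isPWO_support a).image Prod.fst).finite_toSet
  intro j hj
  have hj' : x.coeff j * y.coeff (a - j) ≠ 0 := hj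
  simp only [Finset.coe_image, Set.mem_image, Finset.mem_coe, Finset.mem_antidiagonal]
  exact ⟨(j, a - j), ⟨left_ne_zero_of_mul hj', right_ne_zero_of_mul hj', by ring⟩, rfl⟩

lemma mul_coeff_finsum (x y : LaurentSeries k) (a : ℤ) :
    (x * y).coeff a = ∑ᶠ j : ℤ, x.coeff j * y.coeff (a - j) := by
  classical
  have hsub : (Function.support fun j : ℤ => x.coeff j * y.coeff (a - j)) ⊆
      ↑((Finset.antidiagonal x.isPWO_support y.isPWO_support a).image Prod.fst) := by
    intro j hj
    have hj' : x.coeff j * y.coeff (a - j) ≠ 0 := hj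
    simp only [Finset.coe_image, Set.mem_image, Finset.mem_coe, Finset.mem_antidiagonal]
    exact ⟨(j, a - j), ⟨left_ne_zero_of_mul hj', right_ne_zero_of_mul hj', by ring⟩, rfl⟩
  rw [finsum_eq_sum_of_support_subset _ hsub, HahnSeries.coeff_mul]
  have hinj : ∀ p ∈ Finset.antidiagonal x.isPWO_support y.isPWO_support a,
      ∀ q ∈ Finset.antidiagonal x.isPWO_support y.isPWO_support a,
      p.fst = q.fst → p = q := fun p hp q hq hpq => by
    rw [Finset.mem_antidiagonal] at hp hq
    exact Prod.ext hpq (by omega)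
  have himg := Finset.sum_image (f := fun i => x.coeff i * y.coeff (a - i)) (g := Prod.fst) hinj
  rw [himg]
  apply Finset.sum_congr rfl
  intro p hp
  rw [Finset.mem_antidiagonal] at hp
  have h2 : a - p.1 = p.2 := by omega
  rw [h2]

lemma lderiv_mul (f g : LaurentSeries k) :
    lderiv (f * g) = lderiv f * g + f * lderiv g := by
  ext n
  rw [HahnSeries.coeff_add]
  have hA : (Function.support fun j : ℤ => (j : k) * f.coeff j * g.coeff (n + 1 - j)).Finite := by
    apply (conv_support_finite f g (n + 1)).subset
    intro j hj
    have hj' : (j : k) * f.coeff j * g.coeff (n + 1 - j) ≠ 0 := hj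
    have : f.coeff j * g.coeff (n + 1 - j) ≠ 0 := by
      intro h0
      apply hj'
      rw [mul_assoc, h0, mul_zero]
    exact this
  have hB : (Function.support fun j : ℤ =>
      f.coeff j * (((n : k) + 1 - j) * g.coeff (n + 1 - j))).Finite := by
    apply (conv_support_finite f g (n + 1)).subset
    intro j hj
    have hj' : f.coeff j * (((n : k) + 1 - j) * g.coeff (n + 1 - j)) ≠ 0 := hj
    intro h0
    apply hj'
    rcases mul_eq_zero.1 h0 with h | h
    · rw [h, zero_mul]
    · rw [h, mul_zero, mul_zero]
  have e1 : (lderiv (f * g)).coeff n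
      = ∑ᶠ j : ℤ, ((n : k) + 1) * (f.coeff j * g.coeff (n + 1 - j)) := by
    rw [lderiv_coeff, mul_coeff_finsum, zsmul_eq_mul,
      ← mul_finsum _ _]
    push_cast
    ring_nf
  have e2 : (lderiv f * g).coeff n = ∑ᶠ j : ℤ, (j : k) * f.coeff j * g.coeff (n + 1 - j) := by
    rw [mul_coeff_finsum]
    rw [← finsum_comp_equiv (Equiv.addRight (1 : ℤ))
      (f := fun j : ℤ => (j : k) * f.coeff j * g.coeff (n + 1 - j))]
    apply finsum_congr
    intro j
    have h1 : (Equiv.addRight (1 : ℤ)) j = j + 1 := rfl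
    have h2 : n + 1 - (j + 1) = n - j := by ring
    rw [h1, h2, lderiv_coeff, zsmul_eq_mul]
  have e3 : (f * lderiv g).coeff n
      = ∑ᶠ j : ℤ, f.coeff j * (((n : k) + 1 - j) * g.coeff (n + 1 - j)) := by
    rw [mul_coeff_finsum]
    apply finsum_congr
    intro j
    rw [lderiv_coeff, zsmul_eq_mul]
    have : n - j + 1 = n + 1 - j := by ring
    rw [this]
    push_cast
    ring
  rw [e1, e2, e3, ← finsum_add_distrib hA hB]
  apply finsum_congr
  intro j
  ring

lemma lderiv_one : lderiv (1 : LaurentSeries k) = 0 := by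
  ext n
  rw [lderiv_coeff, HahnSeries.coeff_zero]
  rcases eq_or_ne (n + 1) 0 with h | h
  · rw [h, zero_smul]
  · rw [HahnSeries.coeff_one, if_neg h, smul_zero]

lemma lderiv_pow (f : LaurentSeries k) (m : ℕ) :
    lderiv (f ^ (m + 1)) = ((m : k) + 1) • (f ^ m * lderiv f) := by
  induction m with
  | zero => simp
  | succ m ih =>
    rw [pow_succ, lderiv_mul, ih, smul_mul_assoc]
    have : f ^ m * lderiv f * f = f ^ (m + 1) * lderiv f := by rw [pow_succ]; ring
    rw [this]
    push_cast
    simp only [add_smul, one_smul]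

lemma lderiv_inv (f : LaurentSeries k) (hf : f ≠ 0) :
    lderiv f⁻¹ = -(f⁻¹ ^ 2 * lderiv f) := by
  have h := lderiv_mul f f⁻¹
  rw [mul_inv_cancel₀ hf, lderiv_one] at h
  have hd : f * lderiv f⁻¹ = -(lderiv f * f⁻¹) :=
    eq_neg_of_add_eq_zero_right h.symm
  calc lderiv f⁻¹ = f⁻¹ * (f * lderiv f⁻¹) := by
        rw [← mul_assoc, inv_mul_cancel₀ hf, one_mul]
    _ = f⁻¹ * -(lderiv f * f⁻¹) := by rw [hd]
    _ = -(f⁻¹ ^ 2 * lderiv f) := by ring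

lemma lderiv_res (f : LaurentSeries k) : (lderiv f).coeff (-1) = 0 := by
  rw [lderiv_coeff]
  norm_num

lemma lderiv_single_one_one : lderiv (HahnSeries.single (1 : ℤ) (1 : k)) = 1 := by
  ext n
  rw [lderiv_coeff, HahnSeries.coeff_one, HahnSeries.coeff_single]
  rcases eq_or_ne n 0 with h | h
  · rw [h]; norm_num
  · rw [if_neg (by omega), smul_zero, if_neg h]

lemma order_eq_of_forall {x : LaurentSeries k} {n : ℤ} (hne : x.coeff n ≠ 0)
    (h2 : ∀ m : ℤ, m < n → x.coeff m = 0) : x.order = n := by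
  refine le_antisymm (HahnSeries.order_le_of_coeff_ne_zero hne) ?_
  by_contra hlt
  push_neg at hlt
  exact (mt HahnSeries.coeff_order_eq_zero.1 (HahnSeries.ne_zero_of_coeff_ne_zero hne)) (h2 _ hlt)

section Phi

variable {k : Type*} [Field k] [CharZero k] {φ : LaurentSeries k}
  (h1 : φ.coeff 1 ≠ 0) (hlow : ∀ l : ℤ, l < 1 → φ.coeff l = 0)

include h1 in
lemma phi_ne : φ ≠ 0 := HahnSeries.ne_zero_of_coeff_ne_zero h1

include h1 hlow in
lemma order_phi : φ.order = 1 := order_eq_of_forall h1 hlow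

include h1 hlow in
lemma order_phi_pow (m : ℕ) : (φ ^ m).order = m := by
  induction m with
  | zero => simp [HahnSeries.order_one]
  | succ m ih =>
    rw [pow_succ, HahnSeries.order_mul (pow_ne_zero m (phi_ne h1)) (phi_ne h1), ih,
      order_phi h1 hlow]
    push_cast
    ring

include h1 hlow in
lemma phi_pow_coeff_zero (m : ℕ) {j : ℤ} (hj : j < m) : (φ ^ m).coeff j = 0 :=
  HahnSeries.coeff_eq_zero_of_lt_order (by rw [order_phi_pow h1 hlow]; exact hj)

include h1 hlow in
lemma order_phi_pow_inv (m : ℕ) : ((φ ^ m)⁻¹).order = -m := by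
  have hne : φ ^ m ≠ 0 := pow_ne_zero m (phi_ne h1)
  have h := HahnSeries.order_mul hne (inv_ne_zero hne)
  rw [mul_inv_cancel₀ hne, HahnSeries.order_one, order_phi_pow h1 hlow] at h
  omega

include h1 hlow in
lemma phi_pow_inv_coeff_zero (m : ℕ) {j : ℤ} (hj : j < -(m : ℤ)) : ((φ ^ m)⁻¹).coeff j = 0 :=
  HahnSeries.coeff_eq_zero_of_lt_order (by rw [order_phi_pow_inv h1 hlow]; exact hj)

include h1 in
lemma lderiv_phi_coeff_zero : (lderiv φ).coeff 0 = φ.coeff 1 := by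
  rw [lderiv_coeff]
  norm_num

include hlow in
lemma lderiv_phi_coeff_neg {m : ℤ} (hm : m < 0) : (lderiv φ).coeff m = 0 := by
  rw [lderiv_coeff, hlow (m + 1) (by omega), smul_zero]

include h1 hlow in
lemma order_lderiv_phi : (lderiv φ).order = 0 :=
  order_eq_of_forall (by rw [lderiv_phi_coeff_zero h1]; exact h1)
    (fun m hm => lderiv_phi_coeff_neg hlow hm)

include h1 hlow in
lemma lderiv_phi_ne : lderiv φ ≠ 0 :=
  HahnSeries.ne_zero_of_coeff_ne_zero (by rw [lderiv_phi_coeff_zero h1]; exact h1)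

include h1 hlow in
lemma res_dlog : (lderiv φ * φ⁻¹).coeff (-1) = 1 := by
  set ψ : LaurentSeries k := φ * HahnSeries.single (-1) 1 with hψ
  have h11 : (HahnSeries.single (1 : ℤ) (1 : k)) * HahnSeries.single (-1) 1 = 1 := by
    rw [HahnSeries.single_mul_single]
    norm_num [HahnSeries.single_zero_one]
  have h11' : (HahnSeries.single (-1 : ℤ) (1 : k)) * HahnSeries.single 1 1 = 1 := by
    rw [HahnSeries.single_mul_single]
    norm_num [HahnSeries.single_zero_one]
  have hψφ : ψ * HahnSeries.single 1 1 = φ := by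
    rw [hψ, mul_assoc, h11', mul_one]
  have hψcoeff : ∀ n : ℤ, ψ.coeff n = φ.coeff (n + 1) := by
    intro n
    have := HahnSeries.coeff_mul_single_add (r := (1 : k)) (x := φ) (a := n + 1) (b := -1)
    simpa using this
  have hψ0 : ψ.coeff 0 ≠ 0 := by rw [hψcoeff]; simpa using h1
  have hψne : ψ ≠ 0 := HahnSeries.ne_zero_of_coeff_ne_zero hψ0
  have hψlow : ∀ n : ℤ, n < 0 → ψ.coeff n = 0 := by
    intro n hn
    rw [hψcoeff, hlow (n + 1) (by omega)]
  have hψ'low : ∀ m : ℤ, m < 0 → (lderiv ψ).coeff m = 0 := by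
    intro m hm
    rcases eq_or_ne m (-1) with h | h
    · rw [h, lderiv_res]
    · rw [lderiv_coeff, hψlow (m + 1) (by omega), smul_zero]
  have hres0 : (lderiv ψ * ψ⁻¹).coeff (-1) = 0 := by
    by_cases hd : lderiv ψ = 0
    · rw [hd, zero_mul, HahnSeries.coeff_zero]
    · apply HahnSeries.coeff_eq_zero_of_lt_order
      rw [HahnSeries.order_mul hd (inv_ne_zero hψne)]
      have hd0 : 0 ≤ (lderiv ψ).order := by
        by_contra hc
        push_neg at hc
        exact (mt HahnSeries.coeff_order_eq_zero.1 hd) (hψ'low _ hc)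
      have hψord : ψ.order = 0 := order_eq_of_forall hψ0 hψlow
      have hinv : (ψ⁻¹).order = 0 := by
        have h := HahnSeries.order_mul hψne (inv_ne_zero hψne)
        rw [mul_inv_cancel₀ hψne, HahnSeries.order_one, hψord] at h
        omega
      rw [hinv]
      omega
  have hφ' : lderiv φ = lderiv ψ * HahnSeries.single 1 1 + ψ := by
    rw [← hψφ, lderiv_mul, lderiv_single_one_one, mul_one]
  have hinv : φ⁻¹ = HahnSeries.single (-1) 1 * ψ⁻¹ := by
    rw [← hψφ, mul_inv_rev, inv_eq_of_mul_eq_one_right h11]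
  have hu : ψ * ψ⁻¹ = 1 := mul_inv_cancel₀ hψne
  have key : lderiv φ * φ⁻¹ = lderiv ψ * ψ⁻¹ + HahnSeries.single (-1) 1 := by
    rw [hφ', hinv]
    linear_combination (lderiv ψ * ψ⁻¹) * h11 + (HahnSeries.single (-1 : ℤ) (1 : k)) * hu
  rw [key, HahnSeries.coeff_add, hres0, HahnSeries.coeff_single_same, zero_add]

include h1 hlow in
lemma res_pow (r : ℕ) : (lderiv φ * (φ ^ (r + 2))⁻¹).coeff (-1) = 0 := by
  have hφne : φ ≠ 0 := phi_ne h1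
  have key : lderiv ((φ ^ (r + 1))⁻¹) = (-((r : k) + 1)) • (lderiv φ * (φ ^ (r + 2))⁻¹) := by
    rw [lderiv_inv _ (pow_ne_zero _ hφne), lderiv_pow, mul_smul_comm]
    have hns : (-((r : k) + 1)) • (lderiv φ * (φ ^ (r + 2))⁻¹)
        = -(((r : k) + 1) • (lderiv φ * (φ ^ (r + 2))⁻¹)) := by
      ext n
      simp [HahnSeries.coeff_smul, HahnSeries.coeff_neg]
      ring
    rw [hns, neg_inj]
    congr 1
    have hne2 : (φ ^ (r + 1) : LaurentSeries k) ≠ 0 := pow_ne_zero _ hφne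
    have hne3 : (φ ^ (r + 2) : LaurentSeries k) ≠ 0 := pow_ne_zero _ hφne
    field_simp
    ring
  have h0 := lderiv_res ((φ ^ (r + 1) : LaurentSeries k)⁻¹)
  rw [key, HahnSeries.coeff_smul, smul_eq_mul] at h0
  rcases mul_eq_zero.1 h0 with h | h
  · exact absurd (neg_eq_zero.1 h) (Nat.cast_add_one_ne_zero r)
  · exact h

noncomputable def Tdef (φ : LaurentSeries k) : LaurentSeries k :=
  φ * (lderiv φ)⁻¹ * HahnSeries.single (-1) 1

noncomputable def cdef (φ : LaurentSeries k) (m : ℕ) : k := ((φ ^ m)⁻¹).coeff 0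

include h1 hlow in
lemma order_lderiv_inv : ((lderiv φ)⁻¹).order = 0 := by
  have hne := lderiv_phi_ne h1 hlow
  have h := HahnSeries.order_mul hne (inv_ne_zero hne)
  rw [mul_inv_cancel₀ hne, HahnSeries.order_one, order_lderiv_phi h1 hlow] at h
  omega

include h1 hlow in
lemma T_ne : Tdef φ ≠ 0 :=
  mul_ne_zero (mul_ne_zero (phi_ne h1) (inv_ne_zero (lderiv_phi_ne h1 hlow)))
    (HahnSeries.single_ne_zero one_ne_zero)

include h1 hlow in
lemma T_low : ∀ j : ℤ, j < 0 → (Tdef φ).coeff j = 0 := by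
  have horder : (Tdef φ).order = 0 := by
    unfold Tdef
    rw [HahnSeries.order_mul
        (mul_ne_zero (phi_ne h1) (inv_ne_zero (lderiv_phi_ne h1 hlow)))
        (HahnSeries.single_ne_zero one_ne_zero),
      HahnSeries.order_mul (phi_ne h1) (inv_ne_zero (lderiv_phi_ne h1 hlow)),
      order_phi h1 hlow, order_lderiv_inv h1 hlow, HahnSeries.order_single one_ne_zero]
    ring
  intro j hj
  exact HahnSeries.coeff_eq_zero_of_lt_order (by rw [horder]; exact hj)

include h1 hlow in
lemma main_ind (N : ℕ) :
    (Tdef φ).coeff (N : ℤ) = ∑ m ∈ Finset.range (N + 1), cdef φ m * (φ ^ m).coeff (N : ℤ) := by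
  induction N using Nat.strong_induction_on with
  | _ N IH =>
  have hφne : φ ≠ 0 := phi_ne h1
  have hd_ne : lderiv φ ≠ 0 := lderiv_phi_ne h1 hlow
  set W : LaurentSeries k := lderiv φ * (φ ^ (N + 1))⁻¹ with hW
  have hWne : W ≠ 0 := mul_ne_zero hd_ne (inv_ne_zero (pow_ne_zero _ hφne))
  have hWorder : W.order = -(N + 1 : ℤ) := by
    rw [hW, HahnSeries.order_mul hd_ne (inv_ne_zero (pow_ne_zero _ hφne)),
      order_lderiv_phi h1 hlow, order_phi_pow_inv h1 hlow]
    push_cast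
    ring
  have hWlow : ∀ j : ℤ, j < -(N + 1 : ℤ) → W.coeff j = 0 := fun j hj =>
    HahnSeries.coeff_eq_zero_of_lt_order (by rw [hWorder]; exact hj)
  have hWlead : W.coeff (-(N + 1 : ℤ)) ≠ 0 := by
    have := mt HahnSeries.coeff_order_eq_zero.1 hWne
    rwa [hWorder] at this
  have hTlow : ∀ j : ℤ, j < 0 → (Tdef φ).coeff j = 0 := T_low h1 hlow
  have e : φ * (φ ^ (N + 1))⁻¹ = (φ ^ N)⁻¹ := by
    rw [pow_succ, mul_inv_rev, ← mul_assoc, mul_inv_cancel₀ hφne, one_mul]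
  have hd : (lderiv φ)⁻¹ * lderiv φ = 1 := inv_mul_cancel₀ hd_ne
  have hTW : Tdef φ * W = HahnSeries.single (-1) 1 * (φ ^ N)⁻¹ := by
    rw [hW]
    unfold Tdef
    linear_combination (φ * (φ ^ (N + 1))⁻¹ * HahnSeries.single (-1 : ℤ) (1 : k)) * hd
      + HahnSeries.single (-1 : ℤ) (1 : k) * e
  have hres : (Tdef φ * W).coeff (-1) = cdef φ N := by
    rw [hTW]
    have := HahnSeries.coeff_single_mul_add (r := (1 : k)) (x := (φ ^ N)⁻¹)
      (a := 0) (b := (-1 : ℤ))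
    simpa [cdef] using this
  have expand : ∀ x : LaurentSeries k, (∀ j : ℤ, j < 0 → x.coeff j = 0) →
      (x * W).coeff (-1) = ∑ j ∈ Finset.Icc (0 : ℤ) N, x.coeff j * W.coeff (-1 - j) := by
    intro x hx
    rw [mul_coeff_finsum]
    apply finsum_eq_sum_of_support_subset
    intro j hj
    have hj' : x.coeff j * W.coeff (-1 - j) ≠ 0 := hj
    have h0 : 0 ≤ j := by
      by_contra hc
      push_neg at hc
      exact hj' (by rw [hx j hc, zero_mul])
    have hN : j ≤ N := by
      by_contra hc
      push_neg at hc
      exact hj' (by rw [hWlow (-1 - j) (by omega), mul_zero])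
    simp only [Finset.coe_Icc, Set.mem_Icc]
    omega
  have hresm : ∀ m : ℕ, m ≤ N → (φ ^ m * W).coeff (-1) = if m = N then 1 else 0 := by
    intro m hm
    rcases eq_or_ne m N with rfl | hne
    · rw [if_pos rfl]
      have hid : φ ^ m * W = lderiv φ * φ⁻¹ := by
        rw [hW]
        field_simp
        ring
      rw [hid, res_dlog h1 hlow]
    · rw [if_neg hne]
      obtain ⟨r, rfl⟩ : ∃ r : ℕ, N = m + r + 1 := ⟨N - m - 1, by omega⟩
      have hid : φ ^ m * W = lderiv φ * (φ ^ (r + 2))⁻¹ := by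
        rw [hW]
        field_simp
        ring
      rw [hid, res_pow h1 hlow]
  have key : ∑ j ∈ Finset.Icc (0 : ℤ) N,
      (∑ m ∈ Finset.range (N + 1), cdef φ m * (φ ^ m).coeff j) * W.coeff (-1 - j)
      = cdef φ N := by
    have swap : ∑ j ∈ Finset.Icc (0 : ℤ) N,
        (∑ m ∈ Finset.range (N + 1), cdef φ m * (φ ^ m).coeff j) * W.coeff (-1 - j)
        = ∑ m ∈ Finset.range (N + 1), cdef φ m *
            ∑ j ∈ Finset.Icc (0 : ℤ) N, (φ ^ m).coeff j * W.coeff (-1 - j) := by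
      simp_rw [Finset.sum_mul, Finset.mul_sum]
      rw [Finset.sum_comm]
      simp_rw [mul_assoc]
    rw [swap]
    have hcongr : ∀ m ∈ Finset.range (N + 1),
        cdef φ m * ∑ j ∈ Finset.Icc (0 : ℤ) N, (φ ^ m).coeff j * W.coeff (-1 - j)
        = cdef φ m * (if m = N then 1 else 0) := by
      intro m hm
      rw [← expand (φ ^ m)
          (fun j hj => phi_pow_coeff_zero h1 hlow m (by omega)),
        hresm m (Nat.lt_succ_iff.1 (Finset.mem_range.1 hm))]
    rw [Finset.sum_congr rfl hcongr]
    simp only [mul_ite, mul_one, mul_zero]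
    rw [Finset.sum_ite_eq' (Finset.range (N + 1)) N (cdef φ)]
    simp
  have hzero : ∑ j ∈ Finset.Icc (0 : ℤ) N,
      ((Tdef φ).coeff j - ∑ m ∈ Finset.range (N + 1), cdef φ m * (φ ^ m).coeff j)
        * W.coeff (-1 - j) = 0 := by
    simp_rw [sub_mul]
    rw [Finset.sum_sub_distrib, ← expand (Tdef φ) hTlow, key, hres, sub_self]
  have hterm : ∀ j ∈ Finset.Icc (0 : ℤ) N, j ≠ (N : ℤ) →
      ((Tdef φ).coeff j - ∑ m ∈ Finset.range (N + 1), cdef φ m * (φ ^ m).coeff j)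
        * W.coeff (-1 - j) = 0 := by
    intro j hj hne
    rw [Finset.mem_Icc] at hj
    obtain ⟨n, rfl⟩ : ∃ n : ℕ, j = (n : ℤ) := ⟨j.toNat, (Int.toNat_of_nonneg hj.1).symm⟩
    have hnN : n < N := by
      have := hj.2
      omega
    have hsum : ∑ m ∈ Finset.range (N + 1), cdef φ m * (φ ^ m).coeff (n : ℤ)
        = ∑ m ∈ Finset.range (n + 1), cdef φ m * (φ ^ m).coeff (n : ℤ) := by
      symm
      apply Finset.sum_subset (Finset.range_subset_range.2 (by omega))
      intro m hm hnot
      rw [Finset.mem_range] at hm hnot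
      have hmn : n < m := by omega
      rw [phi_pow_coeff_zero h1 hlow m (by exact_mod_cast hmn), mul_zero]
    rw [hsum, ← IH n hnN, sub_self, zero_mul]
  have hsingle := Finset.sum_eq_single_of_mem (N : ℤ)
    (Finset.mem_Icc.2 ⟨by positivity, le_refl _⟩) hterm
  have hfN : ((Tdef φ).coeff (N : ℤ)
      - ∑ m ∈ Finset.range (N + 1), cdef φ m * (φ ^ m).coeff (N : ℤ))
      * W.coeff (-1 - (N : ℤ)) = 0 := by
    rw [← hsingle, hzero]
  have hWN : W.coeff (-1 - (N : ℤ)) ≠ 0 := by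
    have hcast : (-1 - (N : ℤ)) = -(N + 1 : ℤ) := by ring
    rw [hcast]
    exact hWlead
  have hmain := (mul_eq_zero.1 hfN).resolve_right hWN
  exact sub_eq_zero.1 hmain

end Phi

end CTI

/-- For a field `k` of characteristic zero and `φ ∈ k((t))` with `ν(φ) = 1`
(i.e. `φ = a₁t + a₂t² + ⋯` with `a₁ ≠ 0`), one has
`1 + Σ_{l ≥ 1} [φ^{-l}]₀ · φˡ = φ · (∂φ/∂t)⁻¹ · t⁻¹`, where the series `S` on the left
converges coefficientwise. -/
theorem constant_terms_identity {k : Type*} [Field k] [CharZero k]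
    (φ : LaurentSeries k) (h1 : φ.coeff 1 ≠ 0) (hlow : ∀ l : ℤ, l < 1 → φ.coeff l = 0) :
    ∃ S : LaurentSeries k,
      (∀ i : ℤ, (Function.support fun l : ℕ =>
          (φ⁻¹ ^ (l + 1)).coeff 0 * (φ ^ (l + 1)).coeff i).Finite) ∧
      (∀ i : ℤ, S.coeff i = ∑ᶠ l : ℕ, (φ⁻¹ ^ (l + 1)).coeff 0 * (φ ^ (l + 1)).coeff i) ∧
      1 + S = φ * (lderiv φ)⁻¹ * HahnSeries.single (-1) 1 := by
    classical
  refine ⟨CTI.Tdef φ - 1, ?_, ?_, by unfold CTI.Tdef; ring⟩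
  · intro i
    apply Set.Finite.subset (Finset.range i.toNat).finite_toSet
    intro l hl
    have hl' : (φ⁻¹ ^ (l + 1)).coeff 0 * (φ ^ (l + 1)).coeff i ≠ 0 := hl
    have h2 : (φ ^ (l + 1)).coeff i ≠ 0 := right_ne_zero_of_mul hl'
    have h3 : ((l : ℤ) + 1) ≤ i := by
      by_contra hc
      push_neg at hc
      exact h2 (CTI.phi_pow_coeff_zero h1 hlow (l + 1) (by push_cast; omega))
    simp only [Finset.coe_range, Set.mem_Iio]
    omega
  · intro i
    rw [HahnSeries.coeff_sub]
    rcases lt_trichotomy i 0 with hi | hi | hi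
    · rw [CTI.T_low h1 hlow i hi, HahnSeries.coeff_one, if_neg (by omega)]
      rw [sub_zero]
      symm
      apply finsum_eq_zero_of_forall_eq_zero
      intro l
      rw [CTI.phi_pow_coeff_zero h1 hlow (l + 1) (by push_cast; omega), mul_zero]
    · have hT0 : (CTI.Tdef φ).coeff (0 : ℤ) = 1 := by
        have h00 := CTI.main_ind h1 hlow 0
        simpa [CTI.cdef] using h00
      rw [hi, hT0, HahnSeries.coeff_one, if_pos rfl, sub_self]
      symm
      apply finsum_eq_zero_of_forall_eq_zero
      intro l
      rw [CTI.phi_pow_coeff_zero h1 hlow (l + 1) (by push_cast; omega), mul_zero]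
    · obtain ⟨N, rfl⟩ : ∃ N : ℕ, i = (N : ℤ) := ⟨i.toNat, (Int.toNat_of_nonneg hi.le).symm⟩
      have hN1 : 1 ≤ N := by omega
      rw [HahnSeries.coeff_one, if_neg (by omega), sub_zero, CTI.main_ind h1 hlow N]
      have hfin : ∑ᶠ l : ℕ, (φ⁻¹ ^ (l + 1)).coeff 0 * (φ ^ (l + 1)).coeff (N : ℤ)
          = ∑ l ∈ Finset.range N, (φ⁻¹ ^ (l + 1)).coeff 0 * (φ ^ (l + 1)).coeff (N : ℤ) := by
        apply finsum_eq_sum_of_support_subset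
        intro l hl
        have hl' : (φ⁻¹ ^ (l + 1)).coeff 0 * (φ ^ (l + 1)).coeff (N : ℤ) ≠ 0 := hl
        have h2 : (φ ^ (l + 1)).coeff (N : ℤ) ≠ 0 := right_ne_zero_of_mul hl'
        have h3 : (l : ℤ) + 1 ≤ N := by
          by_contra hc
          push_neg at hc
          exact h2 (CTI.phi_pow_coeff_zero h1 hlow (l + 1) (by push_cast; omega))
        simp only [Finset.coe_range, Set.mem_Iio]
        omega
      rw [hfin]
      rw [Finset.sum_range_succ' (fun m => CTI.cdef φ m * (φ ^ m).coeff (N : ℤ)) N]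
      have hf0 : CTI.cdef φ 0 * (φ ^ 0).coeff (N : ℤ) = 0 := by
        simp only [CTI.cdef, pow_zero, inv_one, HahnSeries.coeff_one]
        rw [if_neg (by omega : (N : ℤ) ≠ 0)]
        simp
      rw [hf0, add_zero]
      apply Finset.sum_congr rfl
      intro l _
      rw [inv_pow]
      rfl
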